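/- Let z : [0, ∞) → ℂ satisfy z(t) ≠ 1 and ζ(z(t)) = e^{-t}·ζ(z(0)) for all t ≥ 0. Then lim sup_{t → ∞} Re(z(t)) ≤ 1; equivalently, for every ε > 0 there exists T such that Re(z(t)) < 1 + ε for all t ≥ T. -/

import Mathlib

open Complex ArithmeticFunction LSeries.notation ArithmeticFunction.Moebius

lemma div_le_div_of_nonneg_right' {a b c : ℝ} (h : a ≤ b) (hc : 0 < c) :
    a / c ≤ b / c := by gcongr

lemma tsum_one_div_rpow_le {a : ℝ} (ha : 1 < a) :
    (∑' n : ℕ, 1 / (n + 1 : ℝ) ^ a) ≤ a / (a - 1) := by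
  have h0 : 0 ≤ ZetaAsymptotics.termTSum a :=
    tsum_nonneg fun n => ZetaAsymptotics.term_nonneg _ _
  have h := ZetaAsymptotics.term_tsum_of_lt ha
  rw [h] at h0
  have ha0 : (0:ℝ) < a := by linarith
  have ha1 : (0:ℝ) < a - 1 := by linarith
  set Z := ∑' n : ℕ, 1 / (n + 1 : ℝ) ^ a with hZ
  have h1 : 1 / a * Z ≤ 1 / (a - 1) := by linarith
  calc Z = a * (1 / a * Z) := by field_simp
    _ ≤ a * (1 / (a - 1)) := by
        have ha0' : (0:ℝ) ≤ a := ha0.le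
        exact mul_le_mul_of_nonneg_left h1 ha0'
    _ = a / (a - 1) := by ring

set_option maxHeartbeats 1000000 in
lemma norm_LSeries_moebius_le {w : ℂ} (hw : 1 < w.re) :
    ‖LSeries ↗μ w‖ ≤ w.re / (w.re - 1) := by
  have hs : LSeriesSummable ↗μ w := LSeriesSummable_moebius_iff.mpr hw
  have hsn : Summable fun n => ‖LSeries.term ↗μ w n‖ := hs.norm
  have hb : ∀ n : ℕ, ‖LSeries.term ↗μ w (n + 1)‖ ≤ 1 / (n + 1 : ℝ) ^ w.re := by
    intro n
    rw [LSeries.norm_term_eq]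
    simp only [Nat.succ_ne_zero, if_false]
    have hμ : ‖(↑(μ (n + 1)) : ℂ)‖ ≤ 1 := by
      rw [Complex.norm_intCast]
      exact_mod_cast (abs_moebius_le_one (n := n + 1))
    have hc : ((n + 1 : ℕ) : ℝ) = (n : ℝ) + 1 := by push_cast; ring
    rw [hc]
    have hp : (0:ℝ) < ((n : ℝ) + 1) ^ w.re := by positivity
    exact div_le_div_of_nonneg_right' hμ hp
  have hLS : ‖LSeries ↗μ w‖ ≤ ∑' n, ‖LSeries.term ↗μ w n‖ := by
    rw [LSeries]
    exact norm_tsum_le_tsum_norm hsn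
  calc ‖LSeries ↗μ w‖ ≤ ∑' n, ‖LSeries.term ↗μ w n‖ := hLS
    _ = ‖LSeries.term ↗μ w 0‖ + ∑' n, ‖LSeries.term ↗μ w (n + 1)‖ := by
        rw [Summable.tsum_eq_zero_add hsn]
    _ = ∑' n, ‖LSeries.term ↗μ w (n + 1)‖ := by
        simp [LSeries.term_zero]
    _ ≤ ∑' n : ℕ, 1 / (n + 1 : ℝ) ^ w.re := by
        have hs1 : Summable fun n : ℕ => ‖LSeries.term ↗μ w (n + 1)‖ :=
          hsn.comp_injective (add_left_injective 1)
        refine Summable.tsum_le_tsum hb hs1 ?_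
        exact_mod_cast (summable_nat_add_iff 1).mpr
          (Real.summable_one_div_nat_rpow.mpr hw)
    _ ≤ w.re / (w.re - 1) := tsum_one_div_rpow_le hw

lemma zeta_lower_bound {w : ℂ} (hw : 1 < w.re) :
    (w.re - 1) / w.re ≤ ‖riemannZeta w‖ := by
  have h1 : riemannZeta w * LSeries ↗μ w = 1 := by
    rw [← LSeries_one_eq_riemannZeta hw]
    exact LSeries_one_mul_Lseries_moebius hw
  have h2 : ‖riemannZeta w‖ * ‖LSeries ↗μ w‖ = 1 := by
    rw [← norm_mul, h1, norm_one]
  have hμpos : 0 < ‖LSeries ↗μ w‖ := by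
    by_contra h
    push_neg at h
    have : ‖LSeries ↗μ w‖ = 0 := le_antisymm h (norm_nonneg _)
    rw [this, mul_zero] at h2
    norm_num at h2
  have hle := norm_LSeries_moebius_le hw
  have ha0 : (0:ℝ) < w.re := by linarith
  have ha1 : (0:ℝ) < w.re - 1 := by linarith
  rw [div_le_iff₀ ha0]
  have hζ : ‖riemannZeta w‖ = 1 / ‖LSeries ↗μ w‖ := by
    rw [eq_div_iff hμpos.ne']
    exact h2
  rw [hζ]
  calc (w.re - 1) = (w.re / (w.re - 1))⁻¹ * w.re := by field_simp
    _ ≤ ‖LSeries ↗μ w‖⁻¹ * w.re := by gcongr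
    _ = 1 / ‖LSeries ↗μ w‖ * w.re := by rw [one_div]

open Complex

/-- If `z(t) ≠ 1` and `ζ(z(t)) = e^{-t} ζ(z(0))` for `t ≥ 0`, then
`limsup_{t→∞} Re z(t) ≤ 1`: for every `ε > 0` there is `T` with
`Re z(t) < 1 + ε` for all `t ≥ T`. -/
theorem limsup_re_le_one (z : ℝ → ℂ)
    (hne : ∀ t : ℝ, 0 ≤ t → z t ≠ 1)
    (hz : ∀ t : ℝ, 0 ≤ t →
      riemannZeta (z t) = Complex.exp (-t) * riemannZeta (z 0)) :
    ∀ ε : ℝ, 0 < ε → ∃ T : ℝ, 0 ≤ T ∧ ∀ t : ℝ, T ≤ t → (z t).re < 1 + ε := by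
  intro ε hε
  set C : ℝ := ‖riemannZeta (z 0)‖ with hC
  have htend : Filter.Tendsto (fun t : ℝ => Real.exp (-t) * C) Filter.atTop (nhds 0) := by
    have : Filter.Tendsto (fun t : ℝ => Real.exp (-t)) Filter.atTop (nhds 0) := by
      simpa using Real.tendsto_exp_comp_nhds_zero.mpr Filter.tendsto_neg_atTop_atBot
    simpa using this.mul_const C
  have hεpos : 0 < ε / (1 + ε) := by positivity
  obtain ⟨T₀, hT₀⟩ := (htend.eventually (eventually_lt_nhds hεpos)).exists_forall_of_atTop
  refine ⟨max T₀ 0, le_max_right _ _, fun t ht => ?_⟩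
  have ht0 : 0 ≤ t := le_trans (le_max_right _ _) ht
  by_contra h
  push_neg at h
  have hre : 1 < (z t).re := by linarith
  have hlow := zeta_lower_bound hre
  have hnorm : ‖riemannZeta (z t)‖ = Real.exp (-t) * C := by
    rw [hz t ht0, norm_mul, hC]
    congr 1
    rw [Complex.norm_exp]
    norm_num
  have hlt : Real.exp (-t) * C < ε / (1 + ε) := hT₀ t (le_trans (le_max_left _ _) ht)
  have hmono : ε / (1 + ε) ≤ ((z t).re - 1) / (z t).re := by
    rw [div_le_div_iff₀ (by positivity) (by linarith)]
    nlinarith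
  rw [hnorm] at hlow
  linarith
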